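/- Let A, G be d×d symmetric positive-definite matrices with G ⪰ A, and let G₊ = SR-k(G, A, U) with U ∈ ℝ^{d×k} chosen either (a) with i.i.d. N(0,1) entries, or (b) as the matrix whose columns are the standard basis vectors corresponding to the k largest diagonal entries of G − A. Then E[tr(G₊ − A)] ≤ (1 − k/d)·tr(G − A). -/

import Mathlib

open Matrix MeasureTheory ProbabilityTheory

/-- The four Penrose conditions characterizing the Moore–Penrose pseudoinverse. -/
def IsMoorePenrose {m n : Type*} [Fintype m] [Fintype n]
    (S : Matrix m n ℝ) (P : Matrix n m ℝ) : Prop :=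
  S * P * S = S ∧ P * S * P = P ∧ (S * P)ᵀ = S * P ∧ (P * S)ᵀ = P * S

namespace SRKAux


lemma cT {m n : Type*} (A : Matrix m n ℝ) : Aᴴ = Aᵀ :=
  Matrix.conjTranspose_eq_transpose_of_trivial A

set_option linter.unusedSectionVars false

variable {n : Type*} [Fintype n] [DecidableEq n]

lemma mp_unique {S P₁ P₂ : Matrix n n ℝ} (h₁ : IsMoorePenrose S P₁)
    (h₂ : IsMoorePenrose S P₂) : P₁ = P₂ := by
  obtain ⟨a1, b1, c1, d1⟩ := h₁
  obtain ⟨a2, b2, c2, d2⟩ := h₂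
  have hS1 : S * P₁ = S * P₂ := by
    calc S * P₁ = (S * P₂ * S) * P₁ := by rw [a2]
    _ = (S * P₂) * (S * P₁) := by simp only [Matrix.mul_assoc]
    _ = (S * P₂)ᵀ * (S * P₁)ᵀ := by rw [c1, c2]
    _ = ((S * P₁) * (S * P₂))ᵀ := (Matrix.transpose_mul _ _).symm
    _ = ((S * P₁ * S) * P₂)ᵀ := by simp only [Matrix.mul_assoc]
    _ = (S * P₂)ᵀ := by rw [a1]
    _ = S * P₂ := c2
  have hS2 : P₁ * S = P₂ * S := by
    calc P₁ * S = P₁ * (S * P₂ * S) := by rw [a2]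
    _ = (P₁ * S) * (P₂ * S) := by simp only [Matrix.mul_assoc]
    _ = (P₁ * S)ᵀ * (P₂ * S)ᵀ := by rw [d1, d2]
    _ = ((P₂ * S) * (P₁ * S))ᵀ := (Matrix.transpose_mul _ _).symm
    _ = (P₂ * (S * P₁ * S))ᵀ := by simp only [Matrix.mul_assoc]
    _ = (P₂ * S)ᵀ := by rw [a1]
    _ = P₂ * S := d2
  calc P₁ = P₁ * S * P₁ := b1.symm
  _ = P₁ * (S * P₁) := by simp only [Matrix.mul_assoc]
  _ = P₁ * (S * P₂) := by rw [hS1]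
  _ = (P₁ * S) * P₂ := by simp only [Matrix.mul_assoc]
  _ = (P₂ * S) * P₂ := by rw [hS2]
  _ = P₂ := b2

lemma mp_transpose {S P : Matrix n n ℝ} (hS : Sᵀ = S) (h : IsMoorePenrose S P) :
    IsMoorePenrose S Pᵀ := by
  obtain ⟨a, b, c, d⟩ := h
  refine ⟨?_, ?_, ?_, ?_⟩
  · have := congrArg Matrix.transpose a
    simp only [Matrix.transpose_mul, Matrix.mul_assoc, hS] at this ⊢
    exact this
  · have := congrArg Matrix.transpose b
    simp only [Matrix.transpose_mul, Matrix.mul_assoc, Matrix.transpose_transpose, hS]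
      at this ⊢
    exact this
  · have hd := d
    simp only [Matrix.transpose_mul, hS, Matrix.transpose_transpose] at hd ⊢
    exact hd.symm
  · have hc := c
    simp only [Matrix.transpose_mul, hS, Matrix.transpose_transpose] at hc ⊢
    exact hc.symm

lemma mp_symm {S P : Matrix n n ℝ} (hS : Sᵀ = S) (h : IsMoorePenrose S P) : Pᵀ = P :=
  mp_unique (mp_transpose hS h) h

lemma mp_psd {S P : Matrix n n ℝ} (hS : S.PosSemidef) (h : IsMoorePenrose S P) :
    P.PosSemidef := by
  have hSt : Sᵀ = S := by rw [← cT]; exact hS.1.eq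
  have hPt : Pᵀ = P := mp_symm hSt h
  have h1 : (Pᴴ * S * P).PosSemidef := hS.conjTranspose_mul_mul_same P
  rw [cT, hPt] at h1
  rwa [h.2.1] at h1

lemma psd_diag_nonneg {X : Matrix n n ℝ} (hX : X.PosSemidef) (i : n) : 0 ≤ X i i := by
  have := hX.dotProduct_mulVec_nonneg (Pi.single i 1)
  simpa [dotProduct, Matrix.mulVec, Pi.single_apply, Finset.sum_ite_eq,
    Finset.sum_ite_eq'] using this

lemma psd_trace_nonneg {X : Matrix n n ℝ} (hX : X.PosSemidef) : 0 ≤ X.trace := by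
  rw [Matrix.trace]
  exact Finset.sum_nonneg fun i _ => psd_diag_nonneg hX i

lemma psd_trace_mul_nonneg {X Y : Matrix n n ℝ} (hX : X.PosSemidef) (hY : Y.PosSemidef) :
    0 ≤ (X * Y).trace := by
  obtain ⟨R, hR, hRR⟩ : ∃ R : Matrix n n ℝ, R.PosSemidef ∧ R * R = X :=
    by open scoped MatrixOrder in exact ⟨CFC.sqrt X, (CFC.sqrt_nonneg X).posSemidef, CFC.sqrt_mul_sqrt_self X hX.nonneg⟩
  have hRt : Rᵀ = R := by rw [← cT]; exact hR.1.eq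
  have h1 : (X * Y).trace = (R * Y * R).trace := by
    rw [← hRR, Matrix.mul_assoc, Matrix.trace_mul_comm]
  have h2 : (R * Y * R).PosSemidef := by
    have := hY.conjTranspose_mul_mul_same R
    rwa [cT, hRt] at this
  rw [h1]; exact psd_trace_nonneg h2

lemma psd_one_sub_idem {Q : Matrix n n ℝ} (hQt : Qᵀ = Q) (hQQ : Q * Q = Q) :
    (1 - Q).PosSemidef := by
  have h : (1 - Q)ᴴ * (1 - Q) = 1 - Q := by
    rw [cT]
    have h1 : (1 - Q)ᵀ = 1 - Q := by rw [Matrix.transpose_sub, Matrix.transpose_one, hQt]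
    rw [h1]
    have h2 : (1 - Q) * (1 - Q) = 1 - Q := by
      simp only [Matrix.sub_mul, Matrix.mul_sub, hQQ, Matrix.mul_one, Matrix.one_mul]
      abel
    exact h2
  have := Matrix.posSemidef_conjTranspose_mul_self (1 - Q)
  rwa [h] at this


lemma key_bounds {d k : ℕ} {B : Matrix (Fin d) (Fin d) ℝ} (hB : B.PosSemidef)
    (U : Matrix (Fin d) (Fin k) ℝ) {Pm : Matrix (Fin k) (Fin k) ℝ}
    (hP : IsMoorePenrose (Uᵀ * B * U) Pm) :
    0 ≤ (B * U * Pm * Uᵀ * B).trace ∧ (B * U * Pm * Uᵀ * B).trace ≤ B.trace := by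
  have hBt : Bᵀ = B := by rw [← cT]; exact hB.1.eq
  have hSpsd : (Uᵀ * B * U).PosSemidef := by
    have := hB.conjTranspose_mul_mul_same U; rwa [cT] at this
  have hSt : (Uᵀ * B * U)ᵀ = Uᵀ * B * U := by rw [← cT]; exact hSpsd.1.eq
  have hPt : Pmᵀ = Pm := mp_symm hSt hP
  have hPpsd : Pm.PosSemidef := mp_psd hSpsd hP
  obtain ⟨C, hCpsd, hCC⟩ : ∃ C : Matrix (Fin d) (Fin d) ℝ, C.PosSemidef ∧ C * C = B :=
    by open scoped MatrixOrder in exact ⟨CFC.sqrt B, (CFC.sqrt_nonneg B).posSemidef, CFC.sqrt_mul_sqrt_self B hB.nonneg⟩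
  have hCt : Cᵀ = C := by rw [← cT]; exact hCpsd.1.eq
  set Q := C * U * Pm * Uᵀ * C with hQ
  have hQt : Qᵀ = Q := by
    simp only [hQ, Matrix.transpose_mul, Matrix.transpose_transpose, hCt, hPt,
      Matrix.mul_assoc]
  have hQQ : Q * Q = Q := by
    have e1 : Q * Q = C * U * (Pm * (Uᵀ * B * U) * Pm) * (Uᵀ * C) := by
      rw [← hCC]; simp only [hQ, Matrix.mul_assoc]
    rw [e1, hP.2.1, hQ]; simp only [Matrix.mul_assoc]
  have hQpsd : Q.PosSemidef := by
    have := hPpsd.conjTranspose_mul_mul_same (Uᵀ * C)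
    rw [cT] at this
    have e : (Uᵀ * C)ᵀ * Pm * (Uᵀ * C) = Q := by
      simp only [Matrix.transpose_mul, Matrix.transpose_transpose, hCt, hQ, Matrix.mul_assoc]
    rwa [e] at this
  have hMain : B * U * Pm * Uᵀ * B = C * Q * C := by
    rw [← hCC]; simp only [hQ, Matrix.mul_assoc]
  have hCQC : (C * Q * C).PosSemidef := by
    have := hQpsd.conjTranspose_mul_mul_same C; rwa [cT, hCt] at this
  constructor
  · rw [hMain]; exact psd_trace_nonneg hCQC
  · have h1 : (1 - Q).PosSemidef := psd_one_sub_idem hQt hQQ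
    have h2 : (C * (1 - Q) * C).PosSemidef := by
      have := h1.conjTranspose_mul_mul_same C; rwa [cT, hCt] at this
    have h3 : C * (1 - Q) * C = B - C * Q * C := by
      rw [Matrix.mul_sub, Matrix.mul_one, Matrix.sub_mul, hCC]
    have h4 : 0 ≤ (B - C * Q * C).trace := by rw [← h3]; exact psd_trace_nonneg h2
    rw [Matrix.trace_sub] at h4
    rw [hMain]; linarith

lemma key_lower {d k : ℕ} {B : Matrix (Fin d) (Fin d) ℝ} (hB : B.PosSemidef)
    (U : Matrix (Fin d) (Fin k) ℝ) {Pm : Matrix (Fin k) (Fin k) ℝ}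
    (hP : IsMoorePenrose (Uᵀ * B * U) Pm)
    (hdet : IsUnit (Uᵀ * U).det) :
    (U * (Uᵀ * U)⁻¹ * Uᵀ * B).trace ≤ (B * U * Pm * Uᵀ * B).trace := by
  have hBt : Bᵀ = B := by rw [← cT]; exact hB.1.eq
  have hSpsd : (Uᵀ * B * U).PosSemidef := by
    have := hB.conjTranspose_mul_mul_same U; rwa [cT] at this
  have hPpsd : Pm.PosSemidef := mp_psd hSpsd hP
  have hTt : (Uᵀ * U)ᵀ = Uᵀ * U := by
    simp only [Matrix.transpose_mul, Matrix.transpose_transpose]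
  have hTit : ((Uᵀ * U)⁻¹)ᵀ = (Uᵀ * U)⁻¹ := by rw [Matrix.transpose_nonsing_inv, hTt]
  set Pr := U * (Uᵀ * U)⁻¹ * Uᵀ with hPr
  have hPrt : Prᵀ = Pr := by
    simp only [hPr, Matrix.transpose_mul, Matrix.transpose_transpose, hTit, Matrix.mul_assoc]
  have hPrPr : Pr * Pr = Pr := by
    have e1 : Pr * Pr = U * ((Uᵀ * U)⁻¹ * (Uᵀ * U * (Uᵀ * U)⁻¹)) * Uᵀ := by
      simp only [hPr, Matrix.mul_assoc]
    rw [e1, Matrix.mul_nonsing_inv _ hdet, Matrix.mul_one, hPr]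
  have hOne : (1 - Pr).PosSemidef := psd_one_sub_idem hPrt hPrPr
  set N := B * U with hN
  have hNt : Nᵀ = Uᵀ * B := by rw [hN, Matrix.transpose_mul, hBt]
  have hD : (Nᵀ * (1 - Pr) * N).PosSemidef := by
    have := hOne.conjTranspose_mul_mul_same N; rwa [cT] at this
  have h0 : 0 ≤ (Pm * (Nᵀ * (1 - Pr) * N)).trace := psd_trace_mul_nonneg hPpsd hD
  have hExp : Nᵀ * (1 - Pr) * N = Nᵀ * N - Nᵀ * Pr * N := by
    rw [Matrix.mul_sub, Matrix.mul_one, Matrix.sub_mul]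
  have tr1 : (Pm * (Nᵀ * N)).trace = (B * U * Pm * Uᵀ * B).trace := by
    have e : N * Pm * Nᵀ = B * U * Pm * Uᵀ * B := by
      rw [hN, hNt]; simp only [Matrix.mul_assoc]
    rw [← e, ← Matrix.trace_mul_cycle, Matrix.mul_assoc]
  have tr2 : (Pm * (Nᵀ * Pr * N)).trace = (U * (Uᵀ * U)⁻¹ * Uᵀ * B).trace := by
    have e : Nᵀ * Pr * N = (Uᵀ * B * U) * (Uᵀ * U)⁻¹ * (Uᵀ * B * U) := by
      rw [hN, hNt, hPr]; simp only [Matrix.mul_assoc]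
    rw [e]
    calc (Pm * (Uᵀ * B * U * (Uᵀ * U)⁻¹ * (Uᵀ * B * U))).trace
        = ((Pm * (Uᵀ * B * U) * (Uᵀ * U)⁻¹) * (Uᵀ * B * U)).trace := by
          simp only [Matrix.mul_assoc]
      _ = ((Uᵀ * B * U) * (Pm * (Uᵀ * B * U) * (Uᵀ * U)⁻¹)).trace :=
          Matrix.trace_mul_comm _ _
      _ = ((Uᵀ * B * U * Pm * (Uᵀ * B * U)) * (Uᵀ * U)⁻¹).trace := by
          simp only [Matrix.mul_assoc]
      _ = ((Uᵀ * B * U) * (Uᵀ * U)⁻¹).trace := by rw [hP.1]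
      _ = ((Uᵀ * B) * (U * (Uᵀ * U)⁻¹)).trace := by simp only [Matrix.mul_assoc]
      _ = ((U * (Uᵀ * U)⁻¹) * (Uᵀ * B)).trace := Matrix.trace_mul_comm _ _
      _ = (U * (Uᵀ * U)⁻¹ * Uᵀ * B).trace := by simp only [Matrix.mul_assoc]
  rw [hExp, Matrix.mul_sub, Matrix.trace_sub, tr1, tr2] at h0
  linarith

lemma greedy_diag_sum {d k : ℕ} (hd : 0 < d) (hk : k ≤ d) (a : Fin d → ℝ)
    (e : Fin k → Fin d) (he : Function.Injective e)
    (hmax : ∀ (i : Fin k) (j : Fin d), (∀ i' : Fin k, e i' ≠ j) → a j ≤ a (e i)) :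
    (k : ℝ) / d * (∑ j, a j) ≤ ∑ i, a (e i) := by
  classical
  set I : Finset (Fin d) := Finset.univ.image e with hI
  have hSI : ∑ j ∈ I, a j = ∑ i, a (e i) := by
    rw [hI, Finset.sum_image (fun x _ y _ h => he h)]
  have hcard : I.card = k := by
    rw [hI, Finset.card_image_of_injective _ he, Finset.card_univ, Fintype.card_fin]
  have hcardc : (Iᶜ : Finset (Fin d)).card = d - k := by
    rw [Finset.card_compl, hcard, Fintype.card_fin]
  have hout : ∀ j ∈ Iᶜ, (k : ℝ) * a j ≤ ∑ i, a (e i) := by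
    intro j hj
    have hj' : ∀ i' : Fin k, e i' ≠ j := by
      intro i' hne
      rw [Finset.mem_compl, hI] at hj
      exact hj (Finset.mem_image.2 ⟨i', Finset.mem_univ _, hne⟩)
    calc (k : ℝ) * a j = ∑ _i : Fin k, a j := by
          rw [Finset.sum_const, Finset.card_univ, Fintype.card_fin, nsmul_eq_mul]
    _ ≤ ∑ i, a (e i) := Finset.sum_le_sum fun i _ => hmax i j hj'
  have hsum : ∑ j ∈ I, a j + ∑ j ∈ Iᶜ, a j = ∑ j, a j := Finset.sum_add_sum_compl I a
  have hSO : (k : ℝ) * (∑ j ∈ Iᶜ, a j) ≤ ((d : ℝ) - k) * ∑ i, a (e i) := by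
    have := Finset.sum_le_sum hout
    rw [Finset.mul_sum]
    calc (∑ j ∈ Iᶜ, (k : ℝ) * a j) ≤ ∑ _j ∈ Iᶜ, ∑ i, a (e i) := this
    _ = ((d - k : ℕ) : ℝ) * ∑ i, a (e i) := by rw [Finset.sum_const, hcardc, nsmul_eq_mul]
    _ = ((d : ℝ) - k) * ∑ i, a (e i) := by rw [Nat.cast_sub hk]
  have hd' : (0 : ℝ) < d := by exact_mod_cast hd
  rw [div_mul_eq_mul_div, div_le_iff₀ hd']
  have : ∑ j, a j = ∑ j ∈ I, a j + ∑ j ∈ Iᶜ, a j := hsum.symm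
  rw [this, hSI]
  ring_nf
  nlinarith [hSO]

lemma greedy_part {d k : ℕ} (hd : 0 < d) (hk : k ≤ d)
    {B : Matrix (Fin d) (Fin d) ℝ} (hB : B.PosSemidef)
    (e : Fin k → Fin d) (he : Function.Injective e)
    (hmax : ∀ (i : Fin k) (j : Fin d), (∀ i' : Fin k, e i' ≠ j) → B j j ≤ B (e i) (e i))
    (Ug : Matrix (Fin d) (Fin k) ℝ)
    (hUg : Ug = Matrix.of fun j i => if e i = j then (1 : ℝ) else 0)
    {Pg : Matrix (Fin k) (Fin k) ℝ}
    (hPg : IsMoorePenrose (Ugᵀ * B * Ug) Pg) :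
    B.trace - (B * Ug * Pg * Ugᵀ * B).trace ≤ (1 - (k : ℝ) / d) * B.trace := by
  classical
  have hUtU : Ugᵀ * Ug = 1 := by
    ext i j
    simp only [Matrix.mul_apply, Matrix.transpose_apply, hUg, Matrix.of_apply, ite_mul,
      one_mul, zero_mul, Finset.sum_ite_eq, Finset.mem_univ, if_true, Matrix.one_apply,
      he.eq_iff]
    simp [eq_comm]
  have hdet : IsUnit (Ugᵀ * Ug).det := by rw [hUtU]; simp
  have hproj := key_lower hB Ug hPg hdet
  have hPUU : Ug * (Ugᵀ * Ug)⁻¹ * Ugᵀ * B = Ug * Ugᵀ * B := by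
    rw [hUtU, inv_one, Matrix.mul_one]
  have hdiag : (Ug * Ugᵀ * B).trace = ∑ i, B (e i) (e i) := by
    rw [Matrix.mul_assoc, Matrix.trace_mul_comm]
    simp [Matrix.trace, Matrix.diag, Matrix.mul_apply, hUg, ite_mul, mul_ite, one_mul,
      zero_mul, mul_one, mul_zero, Finset.sum_ite_eq, Finset.mul_sum]
  have hgs := greedy_diag_sum hd hk (fun j => B j j) e he hmax
  rw [hPUU, hdiag] at hproj
  have : (1 - (k : ℝ) / d) * B.trace = B.trace - (k : ℝ) / d * B.trace := by ring
  rw [this]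
  have htr : B.trace = ∑ j, B j j := rfl
  rw [htr] at *
  linarith

variable {d k : ℕ}

/-- The matrix `U (UᵀU)⁻¹ Uᵀ` built from a function-coded matrix. -/
noncomputable def projm (V : Fin d → Fin k → ℝ) : Matrix (Fin d) (Fin d) ℝ :=
  Matrix.of V * ((Matrix.of V)ᵀ * Matrix.of V)⁻¹ * (Matrix.of V)ᵀ

lemma projm_of_not_isUnit {V : Fin d → Fin k → ℝ}
    (h : ¬ IsUnit ((Matrix.of V)ᵀ * Matrix.of V).det) : projm V = 0 := by
  rw [projm, Matrix.nonsing_inv_apply_not_isUnit _ h, Matrix.mul_zero, Matrix.zero_mul]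

lemma projm_idem {V : Fin d → Fin k → ℝ}
    (h : IsUnit ((Matrix.of V)ᵀ * Matrix.of V).det) :
    (projm V)ᵀ = projm V ∧ projm V * projm V = projm V := by
  set U := Matrix.of V with hU
  have hTt : (Uᵀ * U)ᵀ = Uᵀ * U := by
    simp only [Matrix.transpose_mul, Matrix.transpose_transpose]
  have hTit : ((Uᵀ * U)⁻¹)ᵀ = (Uᵀ * U)⁻¹ := by rw [Matrix.transpose_nonsing_inv, hTt]
  constructor
  · simp only [projm, ← hU, Matrix.transpose_mul, Matrix.transpose_transpose, hTit,
      Matrix.mul_assoc]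
  · have e1 : projm V * projm V = U * ((Uᵀ * U)⁻¹ * (Uᵀ * U * (Uᵀ * U)⁻¹)) * Uᵀ := by
      simp only [projm, ← hU, Matrix.mul_assoc]
    rw [e1, Matrix.mul_nonsing_inv _ h, Matrix.mul_one]
    simp only [projm, ← hU, Matrix.mul_assoc]

lemma projm_psd (V : Fin d → Fin k → ℝ) : (projm V).PosSemidef := by
  by_cases h : IsUnit ((Matrix.of V)ᵀ * Matrix.of V).det
  · have hT : ((Matrix.of V)ᵀ * Matrix.of V).PosSemidef := by
      have := Matrix.posSemidef_conjTranspose_mul_self (Matrix.of V)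
      rwa [cT] at this
    have hTi : (((Matrix.of V)ᵀ * Matrix.of V)⁻¹).PosSemidef := hT.inv
    have := hTi.mul_mul_conjTranspose_same (Matrix.of V)
    rwa [cT] at this
  · rw [projm_of_not_isUnit h]; exact Matrix.PosSemidef.zero

lemma projm_one_sub_psd (V : Fin d → Fin k → ℝ) : (1 - projm V).PosSemidef := by
  by_cases h : IsUnit ((Matrix.of V)ᵀ * Matrix.of V).det
  · exact psd_one_sub_idem (projm_idem h).1 (projm_idem h).2
  · rw [projm_of_not_isUnit h, sub_zero]; exact Matrix.PosSemidef.one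

lemma psd_symm_entries {n : Type*} [Fintype n] [DecidableEq n] {X : Matrix n n ℝ}
    (hX : X.PosSemidef) (i j : n) : X j i = X i j := by
  have := hX.1.apply i j
  simpa using this

lemma psd_entry_le_one {n : Type*} [Fintype n] [DecidableEq n] {X : Matrix n n ℝ}
    (hX : X.PosSemidef) (hX1 : (1 - X).PosSemidef) (i j : n) : |X i j| ≤ 1 := by
  have hdiag : ∀ a, 0 ≤ X a a ∧ X a a ≤ 1 := by
    intro a
    refine ⟨psd_diag_nonneg hX a, ?_⟩
    have := psd_diag_nonneg hX1 a
    rw [Matrix.sub_apply, Matrix.one_apply_eq] at this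
    linarith
  rcases eq_or_ne i j with rfl | hij
  · rw [abs_le]; exact ⟨by linarith [(hdiag i).1], (hdiag i).2⟩
  · have hsym : X j i = X i j := psd_symm_entries hX i j
    have hq : ∀ c : ℝ, 0 ≤ X i i + c * (X i j + X j i) + c * c * X j j := by
      intro c
      set x : n → ℝ := fun a => (if a = i then (1:ℝ) else 0) + c * (if a = j then (1:ℝ) else 0) with hx
      have := hX.dotProduct_mulVec_nonneg x
      have hv : ∀ (v : n → ℝ), x ⬝ᵥ v = v i + c * v j := by
        intro v
        simp [hx, dotProduct, add_mul, Finset.sum_add_distrib, ite_mul, mul_assoc]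
      have hmv : X *ᵥ x = fun a => X a i + c * X a j := by
        funext a
        simp [hx, Matrix.mulVec, dotProduct, mul_add, Finset.sum_add_distrib,
          mul_ite, mul_comm, mul_left_comm]
      rw [star_trivial, hmv, hv] at this
      linarith [this]
    have h1 := hq 1
    have h2 := hq (-1)
    rw [abs_le]
    constructor
    · nlinarith [(hdiag i).2, (hdiag j).2, hsym]
    · nlinarith [(hdiag i).2, (hdiag j).2, hsym]

lemma projm_entry_le_one (V : Fin d → Fin k → ℝ) (i j : Fin d) : |projm V i j| ≤ 1 :=
  psd_entry_le_one (projm_psd V) (projm_one_sub_psd V) i j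

lemma projm_trace {V : Fin d → Fin k → ℝ}
    (h : IsUnit ((Matrix.of V)ᵀ * Matrix.of V).det) : (projm V).trace = k := by
  rw [projm, Matrix.trace_mul_cycle, Matrix.mul_nonsing_inv _ h, Matrix.trace_one]
  simp

lemma projm_sign (s : Fin d → ℝ) (hs : ∀ r, s r * s r = 1) (V : Fin d → Fin k → ℝ)
    (a b : Fin d) :
    projm (fun r c => s r * V r c) a b = s a * projm V a b * s b := by
  have hof : Matrix.of (fun r c => s r * V r c) = Matrix.diagonal s * Matrix.of V := by
    ext r c; simp [Matrix.diagonal_mul]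
  have hDt : (Matrix.diagonal s)ᵀ = Matrix.diagonal s := Matrix.diagonal_transpose s
  have hDD : Matrix.diagonal s * Matrix.diagonal s = 1 := by
    rw [Matrix.diagonal_mul_diagonal]
    rw [show (fun i => s i * s i) = fun _ => (1 : ℝ) from funext hs, Matrix.diagonal_one]
  have hgram : (Matrix.of (fun r c => s r * V r c))ᵀ * Matrix.of (fun r c => s r * V r c)
      = (Matrix.of V)ᵀ * Matrix.of V := by
    rw [hof, Matrix.transpose_mul, hDt]
    calc (Matrix.of V)ᵀ * Matrix.diagonal s * (Matrix.diagonal s * Matrix.of V)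
        = (Matrix.of V)ᵀ * ((Matrix.diagonal s * Matrix.diagonal s) * Matrix.of V) := by
          simp only [Matrix.mul_assoc]
    _ = (Matrix.of V)ᵀ * Matrix.of V := by rw [hDD, Matrix.one_mul]
  have hP : projm (fun r c => s r * V r c)
      = Matrix.diagonal s * projm V * Matrix.diagonal s := by
    rw [projm, hgram, hof, projm]
    rw [Matrix.transpose_mul, hDt]
    simp only [Matrix.mul_assoc]
  rw [hP, Matrix.mul_diagonal, Matrix.diagonal_mul]

lemma projm_perm (σ : Equiv.Perm (Fin d)) (V : Fin d → Fin k → ℝ) (a b : Fin d) :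
    projm (fun r c => V (σ r) c) a b = projm V (σ a) (σ b) := by
  have hof : Matrix.of (fun r c => V (σ r) c) = (Matrix.of V).submatrix σ id := by
    ext r c; simp [Matrix.submatrix_apply]
  have hgram : (Matrix.of (fun r c => V (σ r) c))ᵀ * Matrix.of (fun r c => V (σ r) c)
      = (Matrix.of V)ᵀ * Matrix.of V := by
    rw [hof, Matrix.transpose_submatrix,
      ← Matrix.submatrix_mul _ _ id σ id σ.bijective, Matrix.submatrix_id_id]
  have hP : projm (fun r c => V (σ r) c) = (projm V).submatrix σ σ := by
    rw [projm, hgram, hof, Matrix.transpose_submatrix, projm]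
    rw [show (((Matrix.of V)ᵀ * Matrix.of V)⁻¹ : Matrix (Fin k) (Fin k) ℝ)
        = (((Matrix.of V)ᵀ * Matrix.of V)⁻¹).submatrix id id from
      (Matrix.submatrix_id_id _).symm]
    rw [← Matrix.submatrix_mul _ _ σ id id Function.bijective_id,
      ← Matrix.submatrix_mul _ _ σ id σ Function.bijective_id, Matrix.submatrix_id_id]
  rw [hP, Matrix.submatrix_apply]


variable {d k : ℕ}


lemma continuous_of : Continuous fun V : Fin d → Fin k → ℝ => Matrix.of V :=
  continuous_pi fun i => continuous_pi fun j => (continuous_apply j).comp (continuous_apply i)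

lemma continuous_gram : Continuous fun V : Fin d → Fin k → ℝ => (Matrix.of V)ᵀ * Matrix.of V :=
  (continuous_of.matrix_transpose).matrix_mul continuous_of

lemma measurable_gram_det :
    Measurable fun V : Fin d → Fin k → ℝ => ((Matrix.of V)ᵀ * Matrix.of V).det :=
  (continuous_gram.matrix_det).measurable

lemma measurable_projm_entry (a b : Fin d) :
    Measurable fun V : Fin d → Fin k → ℝ => projm V a b := by
  have hPe : ∀ V : Fin d → Fin k → ℝ, projm V a b
      = Ring.inverse (((Matrix.of V)ᵀ * Matrix.of V).det)
        * (Matrix.of V * ((Matrix.of V)ᵀ * Matrix.of V).adjugate * (Matrix.of V)ᵀ) a b := by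
    intro V
    rw [projm, Matrix.inv_def, Matrix.mul_smul, Matrix.smul_mul, Matrix.smul_apply,
      smul_eq_mul]
  simp_rw [hPe]
  have h1 : Measurable fun V : Fin d → Fin k → ℝ =>
      Ring.inverse (((Matrix.of V)ᵀ * Matrix.of V).det) := by
    rw [Ring.inverse_eq_inv']
    exact measurable_inv.comp measurable_gram_det
  have h2 : Continuous fun V : Fin d → Fin k → ℝ =>
      (Matrix.of V * ((Matrix.of V)ᵀ * Matrix.of V).adjugate * (Matrix.of V)ᵀ) a b :=
    ((continuous_of.matrix_mul continuous_gram.matrix_adjugate).matrix_mul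
      continuous_of.matrix_transpose).matrix_elem a b
  exact h1.mul h2.measurable

lemma gramW_det_eq_zero_iff {m : ℕ} (W : Fin m → Fin d → ℝ) :
    (Matrix.of fun a b => ∑ r, W a r * W b r).det = 0 ↔ ¬ LinearIndependent ℝ W := by
  have hXM : (Matrix.of fun a b => ∑ r, W a r * W b r) = Matrix.of W * (Matrix.of W)ᵀ := by
    ext a b; simp [Matrix.mul_apply]
  have hMv : ∀ v : Fin m → ℝ,
      (Matrix.of fun a b => ∑ r, W a r * W b r) *ᵥ v = Matrix.of W *ᵥ (v ᵥ* Matrix.of W) := by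
    intro v; rw [hXM, ← Matrix.mulVec_mulVec, Matrix.mulVec_transpose]
  have hlcEq : ∀ v : Fin m → ℝ, ∑ i, v i • W i = v ᵥ* Matrix.of W := by
    intro v; funext r
    simp [Matrix.vecMul, dotProduct, Finset.sum_apply]
  rw [← Matrix.exists_mulVec_eq_zero_iff]
  constructor
  · rintro ⟨v, hv0, hv⟩
    rw [Fintype.linearIndependent_iff]
    push_neg
    refine ⟨v, ?_, ?_⟩
    · rw [hlcEq v]
      have h0 : (v ᵥ* Matrix.of W) ⬝ᵥ (v ᵥ* Matrix.of W) = 0 := by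
        have hq : v ⬝ᵥ ((Matrix.of fun a b => ∑ r, W a r * W b r) *ᵥ v) = 0 := by
          rw [hv]; simp
        rwa [hXM, ← Matrix.mulVec_mulVec, dotProduct_mulVec,
          Matrix.mulVec_transpose] at hq
      funext r
      rw [dotProduct] at h0
      have hnn : ∀ x ∈ Finset.univ, (0:ℝ) ≤ (v ᵥ* Matrix.of W) x * (v ᵥ* Matrix.of W) x :=
        fun x _ => mul_self_nonneg _
      exact mul_self_eq_zero.mp
        ((Finset.sum_eq_zero_iff_of_nonneg hnn).1 h0 r (Finset.mem_univ r))
    · rw [Function.ne_iff] at hv0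
      obtain ⟨i0, hi0⟩ := hv0
      exact ⟨i0, hi0⟩
  · intro hdep
    rw [Fintype.linearIndependent_iff] at hdep
    push_neg at hdep
    obtain ⟨g, hg, i0, hgi⟩ := hdep
    refine ⟨g, fun h0 => hgi (by rw [h0]; rfl), ?_⟩
    rw [hlcEq] at hg
    rw [hMv, hg, Matrix.mulVec_zero]

variable {d k : ℕ}

lemma pi_ac : ∀ (n : ℕ) (μ ν : Fin n → Measure ℝ), (∀ i, IsProbabilityMeasure (μ i)) →
    (∀ i, SigmaFinite (ν i)) → (∀ i, μ i ≪ ν i) → Measure.pi μ ≪ Measure.pi ν := by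
  intro n
  induction n with
  | zero =>
    intro μ ν _ _ _
    rw [Measure.pi_of_empty μ, Measure.pi_of_empty ν]
  | succ n ih =>
    intro μ ν hμ hν h
    haveI : ∀ i, IsProbabilityMeasure (μ i) := hμ
    haveI : ∀ i, SigmaFinite (ν i) := hν
    haveI : ∀ i, SigmaFinite (μ i) := fun i => inferInstance
    set e := MeasurableEquiv.piFinSuccAbove (fun _ : Fin (n + 1) => ℝ) 0 with he
    have h1 := measurePreserving_piFinSuccAbove μ 0
    have h2 := measurePreserving_piFinSuccAbove ν 0
    have e1 : Measure.pi μ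
        = Measure.map e.symm ((μ 0).prod (Measure.pi fun i => μ (Fin.succAbove 0 i))) :=
      ((h1.symm e).map_eq).symm
    have e2 : Measure.pi ν
        = Measure.map e.symm ((ν 0).prod (Measure.pi fun i => ν (Fin.succAbove 0 i))) :=
      ((h2.symm e).map_eq).symm
    rw [e1, e2]
    exact Measure.AbsolutelyContinuous.map
      (Measure.AbsolutelyContinuous.prod (h 0)
        (ih _ _ (fun i => hμ _) (fun i => hν _) (fun i => h _))) e.symm.measurable

/-- columns of a function-coded matrix, as a family of vectors -/
def cols {m : ℕ} (V : Fin d → Fin m → ℝ) : Fin m → Fin d → ℝ := fun a r => V r a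

lemma gram_cols {m : ℕ} (V : Fin d → Fin m → ℝ) :
    (Matrix.of V)ᵀ * Matrix.of V = Matrix.of fun a b => ∑ r, cols V a r * cols V b r := by
  ext a b; simp [Matrix.mul_apply, cols]

lemma measurable_det_of_entries {X : Type*} [MeasurableSpace X] {m : ℕ}
    {f : X → Matrix (Fin m) (Fin m) ℝ} (hf : ∀ a b, Measurable fun x => f x a b) :
    Measurable fun x => (f x).det := by
  simp_rw [Matrix.det_apply, Units.smul_def, zsmul_eq_mul]
  exact Finset.measurable_sum _ fun σ _ =>
    measurable_const.mul (Finset.measurable_prod _ fun i _ => hf (σ i) i)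

lemma gram_bad_null (d : ℕ) : ∀ k : ℕ, k ≤ d →
    (Measure.pi fun _ : Fin d => Measure.pi fun _ : Fin k => gaussianReal 0 1)
      {V | ((Matrix.of V)ᵀ * Matrix.of V).det = 0} = 0 := by
  intro k
  induction k with
  | zero =>
    intro _
    have hempty : {V : Fin d → Fin 0 → ℝ | ((Matrix.of V)ᵀ * Matrix.of V).det = 0} = ∅ := by
      ext V; simp [Matrix.det_isEmpty]
    rw [hempty]; exact measure_empty
  | succ k ih =>
    intro hk1
    have hk : k ≤ d := le_trans (Nat.le_succ k) hk1
    have hkd : k < d := hk1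
    set γ : Measure (Fin d → ℝ) := Measure.pi fun _ => gaussianReal 0 1 with hγ
    set μk : Measure (Fin d → Fin k → ℝ) :=
      Measure.pi fun _ : Fin d => Measure.pi fun _ : Fin k => gaussianReal 0 1 with hμk
    -- the splitting map
    set φ : (Fin d → Fin (k + 1) → ℝ) → (Fin d → ℝ) × (Fin d → Fin k → ℝ) :=
      fun V => (MeasurableEquiv.arrowProdEquivProdArrow ℝ (Fin k → ℝ) (Fin d))
        (fun i => (MeasurableEquiv.piFinSuccAbove (fun _ : Fin (k + 1) => ℝ) 0) (V i))
        with hφ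
    have mp1 : MeasurePreserving
        (fun (V : Fin d → Fin (k+1) → ℝ) (i : Fin d) =>
          (MeasurableEquiv.piFinSuccAbove (fun _ : Fin (k + 1) => ℝ) 0) (V i))
        (Measure.pi fun _ : Fin d => Measure.pi fun _ : Fin (k+1) => gaussianReal 0 1)
        (Measure.pi fun _ : Fin d =>
          (gaussianReal 0 1).prod (Measure.pi fun _ : Fin k => gaussianReal 0 1)) :=
      measurePreserving_pi _ _
        (fun _ => measurePreserving_piFinSuccAbove (fun _ : Fin (k+1) => gaussianReal 0 1) 0)
    have mp2 := measurePreserving_arrowProdEquivProdArrow ℝ (Fin k → ℝ) (Fin d)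
      (fun _ => gaussianReal 0 1) (fun _ => Measure.pi fun _ : Fin k => gaussianReal 0 1)
    have mp : MeasurePreserving φ
        (Measure.pi fun _ : Fin d => Measure.pi fun _ : Fin (k+1) => gaussianReal 0 1)
        (γ.prod μk) := mp2.comp mp1
    -- description of φ
    have hφdesc : ∀ V : Fin d → Fin (k+1) → ℝ,
        φ V = (fun i => V i 0, fun i j => V i (Fin.succAbove 0 j)) := by
      intro V
      rfl
    classical
    -- the bad set downstairs
    set F : ((Fin d → ℝ) × (Fin d → Fin k → ℝ)) → (Fin (k+1) → Fin d → ℝ) :=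
      fun p => Fin.cons p.1 (cols p.2) with hFdef
    set S : Set ((Fin d → ℝ) × (Fin d → Fin k → ℝ)) :=
      {p | (Matrix.of fun a b => ∑ r, F p a r * F p b r).det = 0} with hS
    have hF : ∀ a : Fin (k+1), Measurable fun p => F p a := by
      intro a
      refine Fin.cases ?_ ?_ a
      · simpa [hFdef] using measurable_fst
      · intro j
        simp only [hFdef, Fin.cons_succ]
        exact measurable_pi_lambda _ fun r =>
          (measurable_pi_apply j).comp ((measurable_pi_apply r).comp measurable_snd)
    have hdetm : Measurable fun p : (Fin d → ℝ) × (Fin d → Fin k → ℝ) =>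
        (Matrix.of fun a b => ∑ r, F p a r * F p b r).det := by
      refine measurable_det_of_entries fun a b => ?_
      simp only [Matrix.of_apply]
      refine Finset.measurable_sum _ fun r _ => Measurable.mul ?_ ?_
      · exact (measurable_pi_apply r).comp (hF a)
      · exact (measurable_pi_apply r).comp (hF b)
    have hSm : MeasurableSet S := hdetm (measurableSet_singleton 0)
    have hcons : ∀ V : Fin d → Fin (k+1) → ℝ,
        Fin.cons (fun i => V i 0) (cols (fun i j => V i (Fin.succAbove 0 j))) = cols V := by
      intro V
      funext a
      refine Fin.cases ?_ ?_ a
      · rfl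
      · intro j
        rw [Fin.cons_succ]
        funext r
        simp [cols, Fin.succAbove_zero]
    have hpre : {V : Fin d → Fin (k+1) → ℝ | ((Matrix.of V)ᵀ * Matrix.of V).det = 0}
        = φ ⁻¹' S := by
      ext V
      simp only [Set.mem_setOf_eq, Set.mem_preimage, hφdesc, hS, hFdef, gram_cols]
      rw [hcons]
    rw [hpre, mp.measure_preimage hSm.nullMeasurableSet]
    rw [← Measure.prod_swap, Measure.map_apply measurable_swap hSm]
    rw [Measure.measure_prod_null (measurable_swap hSm)]
    have hae : ∀ᵐ W ∂μk, LinearIndependent ℝ (cols W) := by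
      have h0 := ih hk
      rw [ae_iff]
      have hsets : {W : Fin d → Fin k → ℝ | ¬ LinearIndependent ℝ (cols W)}
          = {V : Fin d → Fin k → ℝ | ((Matrix.of V)ᵀ * Matrix.of V).det = 0} := by
        ext W
        simp only [Set.mem_setOf_eq, gram_cols]
        exact (gramW_det_eq_zero_iff (cols W)).symm
      rw [hsets]
      exact h0
    filter_upwards [hae] with W hW
    have hset : Prod.mk W ⁻¹' (Prod.swap ⁻¹' S)
        = ↑(Submodule.span ℝ (Set.range (cols W))) := by
      ext x
      simp only [Set.mem_preimage, Prod.swap_prod_mk, hS, hFdef, Set.mem_setOf_eq,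
        SetLike.mem_coe]
      rw [gramW_det_eq_zero_iff, linearIndependent_fin_cons]
      simp [hW]
    show γ (Prod.mk W ⁻¹' (Prod.swap ⁻¹' S)) = 0
    rw [hset]
    have hac : γ ≪ (volume : Measure (Fin d → ℝ)) := by
      rw [hγ, show (volume : Measure (Fin d → ℝ)) = Measure.pi fun _ => volume from volume_pi]
      exact pi_ac d _ _ (fun _ => inferInstance) (fun _ => inferInstance)
        (fun _ => gaussianReal_absolutelyContinuous 0 one_ne_zero)
    have hspan : Submodule.span ℝ (Set.range (cols W)) ≠ ⊤ := by
      intro htop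
      have h1 : Module.finrank ℝ (Submodule.span ℝ (Set.range (cols W))) ≤ k := by
        refine le_trans (finrank_span_le_card (R := ℝ) (Set.range (cols W))) ?_
        rw [Set.toFinset_range]
        refine le_trans (Finset.card_image_le) ?_
        simp
      rw [htop, finrank_top, Module.finrank_fintype_fun_eq_card, Fintype.card_fin] at h1
      omega
    exact hac (Measure.addHaar_submodule (volume : Measure (Fin d → ℝ)) _ hspan)

variable {d k : ℕ}
noncomputable def gμ (d k : ℕ) : Measure (Fin d → Fin k → ℝ) :=
  Measure.pi fun _ : Fin d => Measure.pi fun _ : Fin k => gaussianReal 0 1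

instance : IsProbabilityMeasure (gμ d k) := by unfold gμ; infer_instance

lemma scale_mp {c : ℝ} (hc : c * c = 1) :
    MeasurePreserving (fun x : ℝ => c * x) (gaussianReal 0 1) (gaussianReal 0 1) := by
  refine ⟨measurable_const_mul c, ?_⟩
  rw [gaussianReal_map_const_mul c, mul_zero]
  congr 1
  have h2 : c ^ 2 = 1 := by nlinarith
  ext
  simp [h2]

lemma integrable_projm_entry (a b : Fin d) :
    Integrable (fun V : Fin d → Fin k → ℝ => projm V a b) (gμ d k) := by
  refine Integrable.mono' (integrable_const 1)
    (measurable_projm_entry a b).aestronglyMeasurable (ae_of_all _ fun V => ?_)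
  simpa [Real.norm_eq_abs] using projm_entry_le_one V a b

lemma int_entry_eq_zero {i j : Fin d} (hij : i ≠ j) :
    ∫ V, projm V i j ∂(gμ d k) = 0 := by
  classical
  set s : Fin d → ℝ := fun r => if r = i then -1 else 1 with hsdef
  have hs : ∀ r, s r * s r = 1 := by
    intro r; by_cases h : r = i <;> simp [hsdef, h]
  set T : (Fin d → Fin k → ℝ) → (Fin d → Fin k → ℝ) := fun V r c => s r * V r c with hT
  have hTmp : MeasurePreserving T (gμ d k) (gμ d k) :=
    measurePreserving_pi _ _ (fun r => measurePreserving_pi _ _ (fun _ => scale_mp (hs r)))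
  have h1 : ∫ V, projm V i j ∂(gμ d k) = ∫ V, projm (T V) i j ∂(gμ d k) := by
    conv_lhs => rw [← hTmp.map_eq]
    refine integral_map hTmp.measurable.aemeasurable ?_
    rw [hTmp.map_eq]
    exact (measurable_projm_entry i j).aestronglyMeasurable
  have h2 : ∀ V : Fin d → Fin k → ℝ, projm (T V) i j = - projm V i j := by
    intro V
    rw [hT]
    rw [projm_sign s hs V i j, hsdef]
    simp [Ne.symm hij]
  have h3 : ∫ V, projm (T V) i j ∂(gμ d k) = - ∫ V, projm V i j ∂(gμ d k) := by
    simp_rw [h2]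
    exact integral_neg _
  linarith [h1, h3, h1.trans h3]

lemma int_diag_eq (i i' : Fin d) :
    ∫ V, projm V i i ∂(gμ d k) = ∫ V, projm V i' i' ∂(gμ d k) := by
  classical
  set σ : Equiv.Perm (Fin d) := Equiv.swap i i' with hσ
  set e : (Fin d → Fin k → ℝ) ≃ᵐ (Fin d → Fin k → ℝ) :=
    MeasurableEquiv.arrowCongr' σ (MeasurableEquiv.refl (Fin k → ℝ)) with he
  have hmp : MeasurePreserving e (gμ d k) (gμ d k) :=
    measurePreserving_arrowCongr' (fun _ => Measure.pi fun _ : Fin k => gaussianReal 0 1)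
      (fun _ => Measure.pi fun _ : Fin k => gaussianReal 0 1) σ
      (MeasurableEquiv.refl (Fin k → ℝ)) (fun _ => ⟨measurable_id, Measure.map_id⟩)
  have hcoe : ∀ (V : Fin d → Fin k → ℝ) (r : Fin d) (c : Fin k), e V r c = V (σ r) c := by
    intro V r c
    show (MeasurableEquiv.arrowCongr' σ (MeasurableEquiv.refl (Fin k → ℝ))) V r c = _
    simp [MeasurableEquiv.arrowCongr', Equiv.arrowCongr', Equiv.arrowCongr, hσ,
      Equiv.symm_swap]
  have h1 : ∫ V, projm V i' i' ∂(gμ d k) = ∫ V, projm (e V) i' i' ∂(gμ d k) := by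
    conv_lhs => rw [← hmp.map_eq]
    refine integral_map hmp.measurable.aemeasurable ?_
    rw [hmp.map_eq]
    exact (measurable_projm_entry i' i').aestronglyMeasurable
  have h2 : ∀ V : Fin d → Fin k → ℝ, projm (e V) i' i' = projm V i i := by
    intro V
    have : e V = fun r c => V (σ r) c := by funext r c; exact hcoe V r c
    rw [this, projm_perm σ V i' i']
    rw [hσ, Equiv.swap_apply_right]
  rw [h1]
  simp_rw [h2]

lemma int_trace_eq (hk : k ≤ d) :
    ∫ V, (∑ a, projm V a a) ∂(gμ d k) = (k : ℝ) := by
  have hae : ∀ᵐ V ∂(gμ d k), (∑ a, projm V a a) = (k : ℝ) := by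
    have h0 := gram_bad_null d k hk
    rw [ae_iff]
    have hsub : {V : Fin d → Fin k → ℝ | ¬ (∑ a, projm V a a) = (k : ℝ)}
        ⊆ {V | ((Matrix.of V)ᵀ * Matrix.of V).det = 0} := by
      intro V hV
      simp only [Set.mem_setOf_eq] at hV ⊢
      by_contra hne
      exact hV (by
        have := projm_trace (isUnit_iff_ne_zero.2 hne)
        simpa [Matrix.trace, Matrix.diag] using this)
    exact measure_mono_null hsub h0
  rw [integral_congr_ae hae]
  simp

lemma int_diag_val (hd : 0 < d) (hk : k ≤ d) (i : Fin d) :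
    ∫ V, projm V i i ∂(gμ d k) = (k : ℝ) / d := by
  have hsum : ∑ a : Fin d, ∫ V, projm V a a ∂(gμ d k) = (k : ℝ) := by
    rw [← integral_finset_sum _ (fun a _ => integrable_projm_entry a a)]
    exact int_trace_eq hk
  have hconst : ∀ a : Fin d, ∫ V, projm V a a ∂(gμ d k) = ∫ V, projm V i i ∂(gμ d k) :=
    fun a => int_diag_eq a i
  rw [Finset.sum_congr rfl (fun a _ => hconst a), Finset.sum_const, Finset.card_univ,
    Fintype.card_fin, nsmul_eq_mul] at hsum
  have hd' : (0:ℝ) < d := by exact_mod_cast hd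
  field_simp
  linarith [hsum]

end SRKAux

open SRKAux in
/-- **Theorem 3.6**: the SR-k update `G₊ = G − (G−A)U(Uᵀ(G−A)U)†Uᵀ(G−A)` with
(a) random Gaussian directions or (b) greedy directions satisfies
`E[tr(G₊ − A)] ≤ (1 − k/d)·tr(G − A)`. -/
theorem srk_update_trace_decrease {d k : ℕ} (hd : 0 < d) (hk : k ≤ d)
    (A G : Matrix (Fin d) (Fin d) ℝ) (hA : A.PosDef) (hG : G.PosDef)
    (hGA : (G - A).PosSemidef)
    {Ω : Type*} [MeasureSpace Ω] [IsProbabilityMeasure (ℙ : Measure Ω)]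
    -- (a) randomized strategy
    (U : Ω → Matrix (Fin d) (Fin k) ℝ)
    (hU : Measure.map (fun ω => fun i j => U ω i j) ℙ =
      Measure.pi fun _ : Fin d => Measure.pi fun _ : Fin k => gaussianReal 0 1)
    (P : Ω → Matrix (Fin k) (Fin k) ℝ)
    (hP : ∀ ω, IsMoorePenrose ((U ω)ᵀ * (G - A) * U ω) (P ω))
    -- (b) greedy strategy: columns are basis vectors of the k largest diagonal
    -- entries of G − A
    (e : Fin k → Fin d) (he : Function.Injective e)
    (hmax : ∀ i : Fin k, ∀ j : Fin d, (∀ i' : Fin k, e i' ≠ j) →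
      (G - A) j j ≤ (G - A) (e i) (e i))
    (Ug : Matrix (Fin d) (Fin k) ℝ)
    (hUg : Ug = Matrix.of fun j i => if e i = j then (1 : ℝ) else 0)
    (Pg : Matrix (Fin k) (Fin k) ℝ)
    (hPg : IsMoorePenrose (Ugᵀ * (G - A) * Ug) Pg) :
    ((∫ ω, ((G - (G - A) * U ω * P ω * (U ω)ᵀ * (G - A)) - A).trace ∂ℙ) ≤
        (1 - (k : ℝ) / d) * (G - A).trace) ∧
      (((G - (G - A) * Ug * Pg * Ugᵀ * (G - A)) - A).trace ≤
        (1 - (k : ℝ) / d) * (G - A).trace) := by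
  classical
  have hd' : (0:ℝ) < d := by exact_mod_cast hd
  have htr : ∀ (X : Matrix (Fin d) (Fin d) ℝ),
      ((G - X) - A).trace = (G - A).trace - X.trace := by
    intro X
    rw [sub_right_comm, Matrix.trace_sub]
  have hBt : 0 ≤ (G - A).trace := psd_trace_nonneg hGA
  have hcoef : 0 ≤ 1 - (k:ℝ)/d := by
    have : (k:ℝ)/d ≤ 1 := by
      rw [div_le_one hd']
      exact_mod_cast hk
    linarith
  constructor
  · -- part (a)
    -- the flattened random matrix
    set F : Ω → (Fin d → Fin k → ℝ) := fun ω => fun i j => U ω i j with hF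
    have hUF : Measure.map F ℙ = gμ d k := hU
    have hFae : AEMeasurable F ℙ := by
      by_contra hna
      rw [Measure.map_of_not_aemeasurable hna] at hUF
      have h2 := congrArg (fun m : Measure (Fin d → Fin k → ℝ) => m Set.univ) hUF
      simp [measure_univ] at h2
    have hofF : ∀ ω, Matrix.of (F ω) = U ω := fun _ => rfl
    have hgoal : (∫ ω, ((G - (G - A) * U ω * P ω * (U ω)ᵀ * (G - A)) - A).trace ∂ℙ)
        = ∫ ω, ((G - A).trace - ((G - A) * U ω * P ω * (U ω)ᵀ * (G - A)).trace) ∂ℙ := by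
      refine integral_congr_ae (ae_of_all _ fun ω => ?_)
      exact htr _
    rw [hgoal]
    -- the dominating function
    set h : (Fin d → Fin k → ℝ) → ℝ := fun V => (projm V * (G - A)).trace with hh
    have hEq : ∀ V : Fin d → Fin k → ℝ,
        h V = ∑ a, ∑ b, projm V a b * (G - A) b a := by
      intro V; simp [hh, Matrix.trace, Matrix.diag, Matrix.mul_apply]
    have hhm : Measurable h := by
      rw [funext hEq]
      exact Finset.measurable_sum _ fun a _ => Finset.measurable_sum _ fun b _ =>
        (measurable_projm_entry a b).mul_const _
    -- value of ∫ h
    have hinth : ∫ V, h V ∂(gμ d k) = (k:ℝ)/d * (G - A).trace := by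
      simp_rw [hEq]
      rw [integral_finset_sum _ (fun a _ => integrable_finset_sum _
        (fun b _ => (integrable_projm_entry a b).mul_const _))]
      have hinner : ∀ a : Fin d,
          (∫ V, ∑ b, projm V a b * (G - A) b a ∂(gμ d k)) = (k:ℝ)/d * (G - A) a a := by
        intro a
        rw [integral_finset_sum _ (fun b _ => (integrable_projm_entry a b).mul_const _)]
        rw [Finset.sum_eq_single a]
        · rw [integral_mul_const, int_diag_val hd hk a]
        · intro b _ hba
          rw [integral_mul_const, int_entry_eq_zero (Ne.symm hba), zero_mul]
        · intro habs
          exact absurd (Finset.mem_univ a) habs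
      rw [Finset.sum_congr rfl fun a _ => hinner a, ← Finset.mul_sum]
      rfl
    -- pointwise bounds on f
    have hfb : ∀ ω, 0 ≤ ((G - A) * U ω * P ω * (U ω)ᵀ * (G - A)).trace ∧
        ((G - A) * U ω * P ω * (U ω)ᵀ * (G - A)).trace ≤ (G - A).trace :=
      fun ω => key_bounds hGA (U ω) (hP ω)
    by_cases hfi : Integrable (fun ω =>
        (G - A).trace - ((G - A) * U ω * P ω * (U ω)ᵀ * (G - A)).trace) ℙ
    swap
    · rw [integral_undef hfi]
      exact mul_nonneg hcoef hBt
    · -- the bad set has measure zero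
      have hBadm : MeasurableSet {V : Fin d → Fin k → ℝ | ((Matrix.of V)ᵀ * Matrix.of V).det = 0} :=
        measurable_gram_det (measurableSet_singleton 0)
      have hbad : ℙ (F ⁻¹' {V | ((Matrix.of V)ᵀ * Matrix.of V).det = 0}) = 0 := by
        rw [← Measure.map_apply_of_aemeasurable hFae hBadm, hUF]
        exact gram_bad_null d k hk
      have hae : ∀ᵐ ω ∂ℙ, IsUnit ((U ω)ᵀ * U ω).det := by
        rw [ae_iff]
        convert hbad using 2
        ext ω
        simp [isUnit_iff_ne_zero, hofF]
      -- a.e. pointwise comparison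
      have hfg : ∀ᵐ ω ∂ℙ,
          (G - A).trace - ((G - A) * U ω * P ω * (U ω)ᵀ * (G - A)).trace
            ≤ (G - A).trace - h (F ω) := by
        filter_upwards [hae] with ω hunit
        have hlow := key_lower hGA (U ω) (hP ω) hunit
        have hproj : h (F ω) = (U ω * ((U ω)ᵀ * U ω)⁻¹ * (U ω)ᵀ * (G - A)).trace := rfl
        rw [hproj]
        linarith
      -- integrability of g
      have hgm : AEStronglyMeasurable (fun ω => (G - A).trace - h (F ω)) ℙ :=
        aestronglyMeasurable_const.sub ((hhm.comp_aemeasurable hFae).aestronglyMeasurable)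
      have hgi : Integrable (fun ω => (G - A).trace - h (F ω)) ℙ := by
        refine Integrable.mono' (integrable_const
          (|(G - A).trace| + ∑ a, ∑ b, |(G - A) b a|)) hgm (ae_of_all _ fun ω => ?_)
        have h1 : |h (F ω)| ≤ ∑ a, ∑ b, |(G - A) b a| := by
          rw [hEq]
          refine le_trans (Finset.abs_sum_le_sum_abs _ _) ?_
          refine Finset.sum_le_sum fun a _ => ?_
          refine le_trans (Finset.abs_sum_le_sum_abs _ _) ?_
          refine Finset.sum_le_sum fun b _ => ?_
          rw [abs_mul]
          calc |projm (F ω) a b| * |(G - A) b a| ≤ 1 * |(G - A) b a| :=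
            mul_le_mul_of_nonneg_right (projm_entry_le_one (F ω) a b) (abs_nonneg _)
          _ = |(G - A) b a| := one_mul _
        rw [Real.norm_eq_abs]
        calc |(G - A).trace - h (F ω)| ≤ |(G - A).trace| + |h (F ω)| := abs_sub _ _
        _ ≤ |(G - A).trace| + ∑ a, ∑ b, |(G - A) b a| := by linarith
      calc ∫ ω, ((G - A).trace - ((G - A) * U ω * P ω * (U ω)ᵀ * (G - A)).trace) ∂ℙ
          ≤ ∫ ω, ((G - A).trace - h (F ω)) ∂ℙ := integral_mono_ae hfi hgi hfg
      _ = (G - A).trace - ∫ ω, h (F ω) ∂ℙ := by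
          rw [integral_sub (integrable_const _) ?hint]
          · rw [integral_const, probReal_univ]
            simp
          · have h0 := (integrable_const ((G - A).trace)).sub hgi
            exact h0.congr (ae_of_all _ fun ω => by simp)
      _ = (G - A).trace - ∫ V, h V ∂(gμ d k) := by
          congr 1
          rw [← hUF]
          exact (integral_map hFae (by rw [hUF]; exact hhm.aestronglyMeasurable)).symm
      _ = (1 - (k:ℝ)/d) * (G - A).trace := by
          rw [hinth]; ring
  · -- part (b)
    rw [htr]
    exact greedy_part hd hk hGA e he hmax Ug hUg hPg
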